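/- arXiv:2407.14484 — 2 statements merged into one kernel-verified Lean document; each statement's English description precedes it below -/
import Mathlib

section
/- Let Λ₊ : ℝ → M_n(ℝ) be continuous with solution operator S₊(y,x) satisfying ‖S₊(y,x)‖ ≤ C e^{−θ(y−x)} for y ≥ x, and let Q₊(x) := ∫ₓ^∞ S₊(y,x)ᵀ S₊(y,x) dy. Suppose additionally ‖S₊(y,x) z‖ ≥ c e^{−M(y−x)} |z| for x ≤ y ≤ x+1 and some c, M > 0 (uniform lower bound on short intervals). Then there are constants 0 < q₁ ≤ q₂ with q₁|z|² ≤ ⟨z, Q₊(x)z⟩ ≤ q₂|z|² for all x and z, i.e., Q₊ is uniformly positive definite and uniformly bounded. -/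
open MeasureTheory Set
open scoped RealInnerProductSpace

lemma integral_exp_neg_mul_sub_Ioi (b x : ℝ) (hb : 0 < b) :
    (∫ y in Ioi x, Real.exp (-b * (y - x))) = 1 / b := by
  have h1 : ∀ y : ℝ, Real.exp (-b * (y - x))
      = Real.exp (b * x) * Real.exp (-(b * y)) := by
    intro y; rw [← Real.exp_add]; ring_nf
  simp_rw [h1]
  rw [integral_const_mul]
  have h2 := integral_comp_mul_left_Ioi (fun y => Real.exp (-y)) x hb
  simp only [smul_eq_mul] at h2
  rw [h2, integral_exp_neg_Ioi, ← mul_assoc, mul_comm (Real.exp (b*x)) b⁻¹,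
    mul_assoc, ← Real.exp_add]
  simp [one_div]

/-- Uniform equivalence of the Lyapunov form: under the exponential decay bound
`‖Sop y x‖ ≤ C e^{-θ(y-x)}` and a short-interval lower bound
`‖Sop y x z‖ ≥ c e^{-M(y-x)} |z|` for `x ≤ y ≤ x+1`, the quadratic form
`q(x,z) := ∫ₓ^∞ ‖Sop y x z‖² dy` is uniformly positive definite and bounded:
`q₁|z|² ≤ q(x,z) ≤ q₂|z|²`. -/
theorem lyapunov_form_uniformly_definite
    {n : ℕ}
    (Λ : ℝ → EuclideanSpace ℝ (Fin n) →L[ℝ] EuclideanSpace ℝ (Fin n))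
    (hΛcont : Continuous Λ)
    (Sop : ℝ → ℝ → EuclideanSpace ℝ (Fin n) →L[ℝ] EuclideanSpace ℝ (Fin n))
    (hSid : ∀ x, Sop x x = ContinuousLinearMap.id ℝ _)
    (hScoc : ∀ x y z, Sop x y ∘L Sop y z = Sop x z)
    (hSflow : ∀ x z, ∀ y, HasDerivAt (fun y' => Sop y' x z) (Λ y (Sop y x z)) y)
    (C θ c M : ℝ) (hC : 0 < C) (hθ : 0 < θ) (hc : 0 < c) (hM : 0 < M)
    (hdecay : ∀ y x : ℝ, x ≤ y → ‖Sop y x‖ ≤ C * Real.exp (-θ * (y - x)))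
    (hlower : ∀ x y : ℝ, x ≤ y → y ≤ x + 1 → ∀ z,
      ‖Sop y x z‖ ≥ c * Real.exp (-M * (y - x)) * ‖z‖) :
    ∃ q₁ q₂ : ℝ, 0 < q₁ ∧ q₁ ≤ q₂ ∧
      ∀ (x : ℝ) (z : EuclideanSpace ℝ (Fin n)),
        q₁ * ‖z‖ ^ 2 ≤ (∫ y in Ioi x, ‖Sop y x z‖ ^ 2) ∧
        (∫ y in Ioi x, ‖Sop y x z‖ ^ 2) ≤ q₂ * ‖z‖ ^ 2 := by
  set q₁ : ℝ := c ^ 2 * Real.exp (-(2 * M)) with hq₁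
  set q₂ : ℝ := max q₁ (C ^ 2 / (2 * θ)) with hq₂
  have hq₁pos : 0 < q₁ := by positivity
  refine ⟨q₁, q₂, hq₁pos, le_max_left _ _, fun x z => ?_⟩
  have hcont : Continuous (fun y => Sop y x z) := by
    rw [continuous_iff_continuousAt]
    exact fun y => (hSflow x z y).continuousAt
  have hfmeas : AEStronglyMeasurable (fun y => ‖Sop y x z‖ ^ 2)
      (volume.restrict (Ioi x)) := ((hcont.norm.pow 2)).aestronglyMeasurable
  -- integrability of dominating function
  have h2θ : (0:ℝ) < 2 * θ := by positivity
  have hgi : IntegrableOn (fun y => Real.exp (-(2 * θ) * (y - x))) (Ioi x) := by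
    have h0 := (exp_neg_integrableOn_Ioi x h2θ).const_mul (Real.exp (2 * θ * x))
    refine h0.congr (Filter.Eventually.of_forall fun y => ?_)
    dsimp only
    rw [← Real.exp_add]; ring_nf
  -- pointwise upper bound
  have hub : ∀ y ∈ Ioi x, ‖Sop y x z‖ ^ 2
      ≤ C ^ 2 * ‖z‖ ^ 2 * Real.exp (-(2 * θ) * (y - x)) := by
    intro y hy
    have hxy : x ≤ y := le_of_lt hy
    have h1 : ‖Sop y x z‖ ≤ C * Real.exp (-θ * (y - x)) * ‖z‖ := by
      calc ‖Sop y x z‖ ≤ ‖Sop y x‖ * ‖z‖ := (Sop y x).le_opNorm z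
        _ ≤ C * Real.exp (-θ * (y - x)) * ‖z‖ := by
            apply mul_le_mul_of_nonneg_right (hdecay y x hxy) (norm_nonneg z)
    have h2 : ‖Sop y x z‖ ^ 2 ≤ (C * Real.exp (-θ * (y - x)) * ‖z‖) ^ 2 :=
      pow_le_pow_left₀ (norm_nonneg _) h1 2
    calc ‖Sop y x z‖ ^ 2 ≤ (C * Real.exp (-θ * (y - x)) * ‖z‖) ^ 2 := h2
      _ = C ^ 2 * ‖z‖ ^ 2 * Real.exp (-(2 * θ) * (y - x)) := by
          rw [mul_pow, mul_pow, ← Real.exp_nat_mul]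
          ring_nf
  have hfi : IntegrableOn (fun y => ‖Sop y x z‖ ^ 2) (Ioi x) := by
    refine Integrable.mono' (hgi.const_mul (C ^ 2 * ‖z‖ ^ 2)) hfmeas ?_
    filter_upwards [ae_restrict_mem measurableSet_Ioi] with y hy
    rw [Real.norm_eq_abs, abs_of_nonneg (by positivity)]
    exact hub y hy
  constructor
  · -- lower bound
    have hsub : (Ioc x (x + 1)) ⊆ Ioi x := Ioc_subset_Ioi_self
    have hlb : ∀ y ∈ Ioc x (x + 1), q₁ * ‖z‖ ^ 2 ≤ ‖Sop y x z‖ ^ 2 := by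
      intro y hy
      have hxy : x ≤ y := le_of_lt hy.1
      have hyx1 : y ≤ x + 1 := hy.2
      have h1 : c * Real.exp (-M) * ‖z‖ ≤ c * Real.exp (-M * (y - x)) * ‖z‖ := by
        have : Real.exp (-M) ≤ Real.exp (-M * (y - x)) := by
          apply Real.exp_le_exp.mpr; nlinarith
        exact mul_le_mul_of_nonneg_right
          (mul_le_mul_of_nonneg_left this hc.le) (norm_nonneg z)
      have h2 : c * Real.exp (-M * (y - x)) * ‖z‖ ≤ ‖Sop y x z‖ :=
        hlower x y hxy hyx1 z
      have h3 : (c * Real.exp (-M) * ‖z‖) ^ 2 ≤ ‖Sop y x z‖ ^ 2 :=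
        pow_le_pow_left₀ (by positivity) (h1.trans h2) 2
      calc q₁ * ‖z‖ ^ 2 = (c * Real.exp (-M) * ‖z‖) ^ 2 := by
            rw [hq₁, mul_pow, mul_pow, ← Real.exp_nat_mul]; ring_nf
        _ ≤ ‖Sop y x z‖ ^ 2 := h3
    calc q₁ * ‖z‖ ^ 2 = ∫ _ in Ioc x (x + 1), q₁ * ‖z‖ ^ 2 := by
          rw [setIntegral_const, Real.volume_real_Ioc]
          norm_num
      _ ≤ ∫ y in Ioc x (x + 1), ‖Sop y x z‖ ^ 2 := by
          apply setIntegral_mono_on (integrableOn_const (by simp))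
            (hfi.mono_set hsub) measurableSet_Ioc hlb
      _ ≤ ∫ y in Ioi x, ‖Sop y x z‖ ^ 2 := by
          apply setIntegral_mono_set hfi
          · filter_upwards with y; positivity
          · exact HasSubset.Subset.eventuallyLE hsub
  · -- upper bound
    calc (∫ y in Ioi x, ‖Sop y x z‖ ^ 2)
        ≤ ∫ y in Ioi x, C ^ 2 * ‖z‖ ^ 2 * Real.exp (-(2 * θ) * (y - x)) := by
          apply setIntegral_mono_on hfi (hgi.const_mul _) measurableSet_Ioi hub
      _ = C ^ 2 * ‖z‖ ^ 2 * (1 / (2 * θ)) := by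
          rw [integral_const_mul, integral_exp_neg_mul_sub_Ioi _ _ h2θ]
      _ = (C ^ 2 / (2 * θ)) * ‖z‖ ^ 2 := by ring
      _ ≤ q₂ * ‖z‖ ^ 2 := by
          apply mul_le_mul_of_nonneg_right (le_max_right _ _) (by positivity)
end

section
/- Let T(η) = Σ_{j=1}^d ηⱼ Aⱼ where A₁,…,A_d are n×n real matrices, and suppose there is a map η ↦ R(η), defined for |η| = 1, with ‖R(η)‖, ‖R(η)⁻¹‖ ≤ K, and R(η)T(η)R(η)⁻¹ real diagonal. Let E be a fixed n×n matrix. Then for |η| sufficiently large (η = rω, |ω| = 1, r large), the matrix iT(η) − E is diagonalizable with a conjugator R̃(η) satisfying ‖R̃(η)‖, ‖R̃(η)⁻¹‖ ≤ 2K, and the eigenvalues of iT(η) − E are, up to O(1/r) errors, equal to i·(eigenvalues of T(η)) minus the corresponding diagonal entries of R(ω)ER(ω)⁻¹. -/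
attribute [local instance] Matrix.normedAddCommGroup Matrix.normedSpace

open Matrix

set_option maxHeartbeats 1000000

lemma aux_mulVec_norm {n : ℕ} (F : Matrix (Fin n) (Fin n) ℂ) (v : Fin n → ℂ) :
    ‖F.mulVec v‖ ≤ n * ‖F‖ * ‖v‖ := by
  have h0 : (0:ℝ) ≤ n * ‖F‖ * ‖v‖ := by positivity
  rw [pi_norm_le_iff_of_nonneg h0]
  intro k
  calc ‖F.mulVec v k‖ = ‖∑ j, F k j * v j‖ := rfl
    _ ≤ ∑ j, ‖F k j * v j‖ := norm_sum_le _ _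
    _ ≤ ∑ _j : Fin n, ‖F‖ * ‖v‖ := by
        refine Finset.sum_le_sum fun j _ => ?_
        rw [norm_mul]
        exact mul_le_mul (F.norm_entry_le_entrywise_sup_norm) (norm_le_pi_norm v j)
          (norm_nonneg _) (norm_nonneg _)
    _ = n * ‖F‖ * ‖v‖ := by simp [mul_assoc]


lemma aux_mul_norm {n : ℕ} (A B : Matrix (Fin n) (Fin n) ℂ) : ‖A * B‖ ≤ n * ‖A‖ * ‖B‖ := by
  have h0 : (0:ℝ) ≤ n * ‖A‖ * ‖B‖ := by positivity
  rw [Matrix.norm_le_iff h0]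
  intro i j
  calc ‖(A * B) i j‖ = ‖∑ k, A i k * B k j‖ := rfl
    _ ≤ ∑ k, ‖A i k * B k j‖ := norm_sum_le _ _
    _ ≤ ∑ _k : Fin n, ‖A‖ * ‖B‖ := by
        refine Finset.sum_le_sum fun k _ => ?_
        rw [norm_mul]
        exact mul_le_mul (A.norm_entry_le_entrywise_sup_norm) (B.norm_entry_le_entrywise_sup_norm)
          (norm_nonneg _) (norm_nonneg _)
    _ = n * ‖A‖ * ‖B‖ := by simp [mul_assoc]

lemma aux_one_norm {n : ℕ} : ‖(1 : Matrix (Fin n) (Fin n) ℂ)‖ ≤ 1 := by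
  rw [Matrix.norm_le_iff zero_le_one]
  intro i j
  by_cases h : i = j <;> simp [Matrix.one_apply, h]

lemma aux_fixed {n : ℕ} (F : Matrix (Fin n) (Fin n) ℂ) (dv : Fin n → ℝ) (δ M r : ℝ)
    (hδ : 0 < δ) (hM : 1 ≤ M) (hF : ‖F‖ ≤ M)
    (hgap : ∀ k j : Fin n, k ≠ j → δ ≤ |dv k - dv j|)
    (hr : 8 * n * M / δ ≤ r) (hr1 : 1 ≤ r) (i : Fin n) :
    ∃ w : Fin n → ℂ, w i = 0 ∧ ‖w‖ ≤ 4 * n * M / δ / r ∧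
      ∀ k, Complex.I * (r * dv k) * ((Pi.single i 1 : Fin n → ℂ) + w) k
            - F.mulVec ((Pi.single i 1 : Fin n → ℂ) + w) k
          = (Complex.I * (r * dv i) - F.mulVec ((Pi.single i 1 : Fin n → ℂ) + w) i)
              * ((Pi.single i 1 : Fin n → ℂ) + w) k := by
  classical
  have hn1 : (1:ℝ) ≤ n := by
    exact_mod_cast Nat.one_le_iff_ne_zero.2 (by rintro rfl; exact i.elim0)
  have hre : (0:ℝ) < r := lt_of_lt_of_le one_pos hr1
  have hnM : (1:ℝ) ≤ n * M := by nlinarith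
  have hrδ : 8 * (n * M) ≤ r * δ := by
    have h := (div_le_iff₀ hδ).1 hr
    nlinarith
  set e : Fin n → ℂ := Pi.single i 1 with he
  have he_norm : ‖e‖ ≤ 1 := by
    rw [pi_norm_le_iff_of_nonneg zero_le_one]
    intro k
    rw [he]
    rcases eq_or_ne k i with h | h
    · subst h; simp
    · rw [Pi.single_eq_of_ne h]; simp
  set m : (Fin n → ℂ) → (Fin n → ℂ) := fun w => F.mulVec (e + w) with hm
  have hm_bound : ∀ w : Fin n → ℂ, ‖w‖ ≤ 1 → ‖m w‖ ≤ 2 * (n * M) := by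
    intro w hw
    have h1 : ‖e + w‖ ≤ 2 := le_trans (norm_add_le _ _) (by linarith)
    have h2 := aux_mulVec_norm F (e + w)
    have h3 : (0:ℝ) ≤ n := by linarith
    have h4 : (n:ℝ) * ‖F‖ * ‖e + w‖ ≤ n * M * 2 :=
      mul_le_mul (mul_le_mul_of_nonneg_left hF h3) h1 (norm_nonneg _) (by positivity)
    calc ‖m w‖ = ‖F.mulVec (e + w)‖ := by rw [hm]
      _ ≤ n * ‖F‖ * ‖e + w‖ := h2
      _ ≤ 2 * (n * M) := by linarith
  have hm_lip : ∀ w w' : Fin n → ℂ, ‖m w - m w'‖ ≤ n * M * ‖w - w'‖ := by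
    intro w w'
    have h1 : m w - m w' = F.mulVec (w - w') := by
      rw [hm]
      simp only []
      rw [Matrix.mulVec_add, Matrix.mulVec_add, Matrix.mulVec_sub]
      abel
    rw [h1]
    have h2 := aux_mulVec_norm F (w - w')
    have h3 : (0:ℝ) ≤ n := by linarith
    have h4 : (n:ℝ) * ‖F‖ * ‖w - w'‖ ≤ n * M * ‖w - w'‖ :=
      mul_le_mul_of_nonneg_right (mul_le_mul_of_nonneg_left hF h3) (norm_nonneg _)
    linarith
  set b : (Fin n → ℂ) → Fin n → ℂ :=
    fun w k => Complex.I * (r * dv k) - Complex.I * (r * dv i) + m w i with hb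
  have hb_lip : ∀ w w' : Fin n → ℂ, ∀ k, ‖b w' k - b w k‖ ≤ n * M * ‖w - w'‖ := by
    intro w w' k
    have h1 : b w' k - b w k = (m w' - m w) i := by rw [hb]; simp
    rw [h1]
    calc ‖(m w' - m w) i‖ ≤ ‖m w' - m w‖ := norm_le_pi_norm _ i
      _ = ‖m w - m w'‖ := by rw [norm_sub_rev]
      _ ≤ n * M * ‖w - w'‖ := hm_lip w w'
  have hb_lower : ∀ w : Fin n → ℂ, ‖w‖ ≤ 1 → ∀ k, k ≠ i → r * δ / 2 ≤ ‖b w k‖ := by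
    intro w hw k hk
    have h1 : ‖Complex.I * (r * dv k) - Complex.I * (r * dv i)‖ = r * |dv k - dv i| := by
      have h2 : Complex.I * (r * dv k) - Complex.I * (r * dv i)
          = Complex.I * (((r * (dv k - dv i) : ℝ) : ℂ)) := by push_cast; ring
      rw [h2, norm_mul, Complex.norm_I, one_mul, Complex.norm_real, Real.norm_eq_abs,
        abs_mul, abs_of_pos hre]
    have h3 : r * δ ≤ r * |dv k - dv i| := by
      have := hgap k i hk
      nlinarith
    have h4 : ‖m w i‖ ≤ 2 * (n * M) :=
      le_trans (norm_le_pi_norm (m w) i) (hm_bound w hw)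
    have h5 : ‖Complex.I * (r * dv k) - Complex.I * (r * dv i)‖
        ≤ ‖b w k‖ + ‖m w i‖ := by
      have : Complex.I * (r * dv k) - Complex.I * (r * dv i) = b w k - m w i := by
        rw [hb]; ring
      rw [this]
      exact norm_sub_le _ _
    rw [h1] at h5
    linarith
  set Φ : (Fin n → ℂ) → Fin n → ℂ :=
    fun w k => if k = i then 0 else m w k / b w k with hΦ
  have hρ0 : (0:ℝ) ≤ 4 * n * M / δ / r := by positivity
  have hΦ_bound : ∀ w : Fin n → ℂ, ‖w‖ ≤ 1 → ‖Φ w‖ ≤ 4 * n * M / δ / r := by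
    intro w hw
    rw [pi_norm_le_iff_of_nonneg hρ0]
    intro k
    rcases eq_or_ne k i with hk | hk
    · rw [hΦ]; simp only [if_pos hk]; simpa using hρ0
    · rw [hΦ]
      simp only [if_neg hk, norm_div]
      have hbk := hb_lower w hw k hk
      have hmk : ‖m w k‖ ≤ 2 * (n * M) := le_trans (norm_le_pi_norm _ k) (hm_bound w hw)
      have hX : (0:ℝ) < r * δ / 2 := by positivity
      calc ‖m w k‖ / ‖b w k‖ ≤ 2 * (n * M) / (r * δ / 2) :=
            div_le_div₀ (by positivity) hmk hX hbk
        _ = 4 * n * M / δ / r := by field_simp; ring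
  have hρhalf : 4 * n * M / δ / r ≤ 1 / 2 := by
    rw [div_div, div_le_iff₀ (by positivity : (0:ℝ) < δ * r)]
    nlinarith
  have hΦ_lip : ∀ w w' : Fin n → ℂ, ‖w‖ ≤ 1 → ‖w'‖ ≤ 1 →
      ‖Φ w - Φ w'‖ ≤ 1 / 2 * ‖w - w'‖ := by
    intro w w' hw hw'
    have h0 : (0:ℝ) ≤ 1 / 2 * ‖w - w'‖ := by positivity
    rw [pi_norm_le_iff_of_nonneg h0]
    intro k
    rcases eq_or_ne k i with hk | hk
    · rw [Pi.sub_apply, hΦ]; simp only [if_pos hk]; simpa using h0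
    · have hb1 := hb_lower w hw k hk
      have hb2 := hb_lower w' hw' k hk
      have hX : (0:ℝ) < r * δ / 2 := by positivity
      have hb10 : b w k ≠ 0 := by
        intro h; rw [h, norm_zero] at hb1; linarith
      have hb20 : b w' k ≠ 0 := by
        intro h; rw [h, norm_zero] at hb2; linarith
      have key : Φ w k - Φ w' k = (m w k - m w' k) / b w k
          + m w' k * (b w' k - b w k) / (b w k * b w' k) := by
        rw [hΦ]
        simp only [if_neg hk]
        field_simp
        ring
      have hd1 : ‖m w k - m w' k‖ ≤ n * M * ‖w - w'‖ := by
        calc ‖m w k - m w' k‖ = ‖(m w - m w') k‖ := by rw [Pi.sub_apply]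
          _ ≤ ‖m w - m w'‖ := norm_le_pi_norm _ k
          _ ≤ n * M * ‖w - w'‖ := hm_lip w w'
      have hd2 := hb_lip w w' k
      have hmk' : ‖m w' k‖ ≤ 2 * (n * M) := le_trans (norm_le_pi_norm _ k) (hm_bound w' hw')
      have t1 : ‖(m w k - m w' k) / b w k‖ ≤ n * M * ‖w - w'‖ / (r * δ / 2) := by
        rw [norm_div]
        exact div_le_div₀ (by positivity) hd1 hX hb1
      have t2 : ‖m w' k * (b w' k - b w k) / (b w k * b w' k)‖
          ≤ 2 * (n * M) * (n * M * ‖w - w'‖) / (r * δ / 2 * (r * δ / 2)) := by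
        rw [norm_div, norm_mul]
        refine div_le_div₀ (by positivity) ?_ (by positivity) ?_
        · exact mul_le_mul hmk' hd2 (norm_nonneg _) (by positivity)
        · rw [norm_mul]
          exact mul_le_mul hb1 hb2 hX.le (le_trans hX.le hb1)
      have tri := norm_add_le ((m w k - m w' k) / b w k)
        (m w' k * (b w' k - b w k) / (b w k * b w' k))
      rw [← key] at tri
      have hc1 : n * M * ‖w - w'‖ / (r * δ / 2) ≤ 1 / 4 * ‖w - w'‖ := by
        rw [div_le_iff₀ hX]
        nlinarith [norm_nonneg (w - w')]
      have hc2 : 2 * (n * M) * (n * M * ‖w - w'‖) / (r * δ / 2 * (r * δ / 2))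
          ≤ 1 / 8 * ‖w - w'‖ := by
        rw [div_le_iff₀ (by positivity : (0:ℝ) < r * δ / 2 * (r * δ / 2))]
        have h64 : 64 * ((↑n * M) * (↑n * M)) ≤ (r * δ) * (r * δ) := by nlinarith
        nlinarith [mul_nonneg (norm_nonneg (w - w'))
          (sub_nonneg.2 h64), norm_nonneg (w - w')]
      calc ‖(Φ w - Φ w') k‖ = ‖Φ w k - Φ w' k‖ := by rw [Pi.sub_apply]
        _ ≤ _ := tri
        _ ≤ 1 / 4 * ‖w - w'‖ + 1 / 8 * ‖w - w'‖ := add_le_add (le_trans t1 hc1) (le_trans t2 hc2)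
        _ ≤ 1 / 2 * ‖w - w'‖ := by nlinarith [norm_nonneg (w - w')]
  -- Banach fixed point on the closed unit ball
  set s : Set (Fin n → ℂ) := Metric.closedBall 0 1 with hs
  have hsc : IsComplete s := Metric.isClosed_closedBall.isComplete
  have hmem : ∀ w ∈ s, ‖w‖ ≤ 1 := by
    intro w hw
    rw [hs, Metric.mem_closedBall, dist_zero_right] at hw
    exact hw
  have hsf : Set.MapsTo Φ s s := by
    intro w hw
    rw [hs, Metric.mem_closedBall, dist_zero_right]
    linarith [hΦ_bound w (hmem w hw)]
  have hcontr : ContractingWith (1/2 : NNReal) (hsf.restrict Φ s s) := by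
    constructor
    · rw [← NNReal.coe_lt_coe]; norm_num
    · refine LipschitzWith.of_dist_le_mul fun x y => ?_
      have h := hΦ_lip x.1 y.1 (hmem _ x.2) (hmem _ y.2)
      rw [Subtype.dist_eq, Subtype.dist_eq, dist_eq_norm, dist_eq_norm]
      simpa using h
  have h0s : (0 : Fin n → ℂ) ∈ s := by
    rw [hs, Metric.mem_closedBall, dist_zero_right]; simp
  obtain ⟨w, hws, hwfix, -, -⟩ :=
    hcontr.exists_fixedPoint' hsc hsf h0s (edist_ne_top _ _)
  have hw1 : ‖w‖ ≤ 1 := hmem w hws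
  have hfix : Φ w = w := hwfix
  have hwi : w i = 0 := by rw [← hfix, hΦ]; simp
  have hwnorm : ‖w‖ ≤ 4 * n * M / δ / r := by
    rw [← hfix]; exact hΦ_bound w hw1
  refine ⟨w, hwi, hwnorm, fun k => ?_⟩
  rcases eq_or_ne k i with hk | hk
  · subst hk
    have h1 : (e + w) k = 1 := by rw [he, Pi.add_apply, Pi.single_eq_same, hwi, add_zero]
    show Complex.I * (r * dv k) * (e + w) k - m w k = (Complex.I * (r * dv k) - m w k) * (e + w) k
    rw [h1]; ring
  · have hbk := hb_lower w hw1 k hk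
    have hb0 : b w k ≠ 0 := by
      intro h; rw [h, norm_zero] at hbk
      have : (0:ℝ) < r * δ / 2 := by positivity
      linarith
    have hwk : w k = m w k / b w k := by
      conv_lhs => rw [← hfix]
      rw [hΦ]; simp only [if_neg hk]
    have key : w k * b w k = m w k := by rw [hwk, div_mul_cancel₀ _ hb0]
    have hek : (e + w) k = w k := by rw [he, Pi.add_apply, Pi.single_eq_of_ne hk, zero_add]
    show Complex.I * (r * dv k) * (e + w) k - m w k = (Complex.I * (r * dv i) - m w i) * (e + w) k
    rw [hek]
    have hbdef : b w k = Complex.I * (r * dv k) - Complex.I * (r * dv i) + m w i := by rw [hb]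
    rw [hbdef] at key
    linear_combination key

/-- Matrix perturbation step of Corollary 3.3: if `T(η) = Σ ηⱼ Aⱼ` is
uniformly diagonalizable on the unit sphere with simple real spectrum, then for
`η = rω` with `r` large, `iT(η) - E` is diagonalizable with conjugator bounded
by `2K`, and its eigenvalues equal `i·r·dᵢ(ω) - (R(ω) E R(ω)⁻¹)ᵢᵢ` up to
`O(1/r)` errors. -/
theorem highfreq_diagonalization_perturbation
    {n d : ℕ} (K : ℝ) (hK : 1 ≤ K)
    (A : Fin d → Matrix (Fin n) (Fin n) ℂ)
    (E : Matrix (Fin n) (Fin n) ℂ)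
    (R Rinv : EuclideanSpace ℝ (Fin d) → Matrix (Fin n) (Fin n) ℂ)
    (dvals : EuclideanSpace ℝ (Fin d) → Fin n → ℝ)
    (hRcont : Continuous R) (hRinvcont : Continuous Rinv)
    (hdcont : Continuous dvals)
    (hRinvR : ∀ ω, ‖ω‖ = 1 → R ω * Rinv ω = 1 ∧ Rinv ω * R ω = 1)
    (hRbd : ∀ ω, ‖ω‖ = 1 → ‖R ω‖ ≤ K ∧ ‖Rinv ω‖ ≤ K)
    (hdiag : ∀ ω, ‖ω‖ = 1 →
      R ω * (∑ j, (ω j : ℂ) • A j) * Rinv ω =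
        Matrix.diagonal (fun i => (dvals ω i : ℂ)))
    (hsimple : ∀ ω, ‖ω‖ = 1 → Function.Injective (dvals ω)) :
    ∃ r₀ C' : ℝ, 0 < r₀ ∧ 0 < C' ∧
      ∀ r : ℝ, r₀ ≤ r → ∀ ω : EuclideanSpace ℝ (Fin d), ‖ω‖ = 1 →
        ∃ (Rt Rtinv : Matrix (Fin n) (Fin n) ℂ) (μ : Fin n → ℂ),
          Rt * Rtinv = 1 ∧ Rtinv * Rt = 1 ∧
          ‖Rt‖ ≤ 2 * K ∧ ‖Rtinv‖ ≤ 2 * K ∧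
          Rt * (Complex.I • (∑ j, ((r * ω j : ℝ) : ℂ) • A j) - E) * Rtinv =
            Matrix.diagonal μ ∧
          ∀ i, ‖μ i - (Complex.I * (r * dvals ω i : ℝ) -
              (R ω * E * Rinv ω) i i)‖ ≤ C' / r := by
  classical
  by_cases hex : ∃ ω : EuclideanSpace ℝ (Fin d), ‖ω‖ = 1
  swap
  · exact ⟨1, 1, one_pos, one_pos, fun r hr ω hω => absurd ⟨ω, hω⟩ hex⟩
  obtain ⟨ω₀, hω₀⟩ := hex
  -- uniform spectral gap
  have hδex : ∃ δ : ℝ, 0 < δ ∧ ∀ ω : EuclideanSpace ℝ (Fin d), ‖ω‖ = 1 →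
      ∀ k j : Fin n, k ≠ j → δ ≤ |dvals ω k - dvals ω j| := by
    have hpair : ∀ p : Fin n × Fin n, ∃ c : ℝ, 0 < c ∧
        (p.1 ≠ p.2 → ∀ ω : EuclideanSpace ℝ (Fin d), ‖ω‖ = 1 →
          c ≤ |dvals ω p.1 - dvals ω p.2|) := by
      intro p
      by_cases hp : p.1 = p.2
      · exact ⟨1, one_pos, fun h => absurd hp h⟩
      · have hcont : Continuous fun ω : EuclideanSpace ℝ (Fin d) =>
            |dvals ω p.1 - dvals ω p.2| :=
          (((continuous_apply p.1).comp hdcont).sub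
            ((continuous_apply p.2).comp hdcont)).abs
        have hcpt : IsCompact (Metric.sphere (0 : EuclideanSpace ℝ (Fin d)) 1) :=
          isCompact_sphere 0 1
        have hne : (Metric.sphere (0 : EuclideanSpace ℝ (Fin d)) 1).Nonempty :=
          ⟨ω₀, by rwa [mem_sphere_zero_iff_norm]⟩
        obtain ⟨ωm, hωm, hmin⟩ := hcpt.exists_isMinOn hne hcont.continuousOn
        have hωm1 : ‖ωm‖ = 1 := by rwa [← mem_sphere_zero_iff_norm]
        refine ⟨|dvals ωm p.1 - dvals ωm p.2|, ?_, fun _ ω hω => ?_⟩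
        · rw [abs_pos, sub_ne_zero]
          exact fun h => hp (hsimple ωm hωm1 h)
        · exact isMinOn_iff.1 hmin ω (by rwa [mem_sphere_zero_iff_norm])
    choose c hc0 hcbd using hpair
    refine ⟨(insert (1:ℝ) (Finset.image c Finset.univ)).min'
      (Finset.insert_nonempty _ _), ?_, ?_⟩
    · rw [Finset.lt_min'_iff]
      intro y hy
      rcases Finset.mem_insert.1 hy with h | h
      · rw [h]; exact one_pos
      · obtain ⟨p, -, rfl⟩ := Finset.mem_image.1 h
        exact hc0 p
    · intro ω hω k j hkj
      refine le_trans (Finset.min'_le _ (c (k, j))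
        (Finset.mem_insert_of_mem (Finset.mem_image_of_mem c (Finset.mem_univ _)))) ?_
      exact hcbd (k, j) hkj ω hω
  obtain ⟨δ, hδ, hgap⟩ := hδex
  set M : ℝ := n * n * K * K * ‖E‖ + 1 with hMdef
  have hM1 : 1 ≤ M := by
    have : (0:ℝ) ≤ n * n * K * K * ‖E‖ := by positivity
    linarith
  have hM0 : 0 < M := lt_of_lt_of_le one_pos hM1
  have hFbd : ∀ ω : EuclideanSpace ℝ (Fin d), ‖ω‖ = 1 → ‖R ω * E * Rinv ω‖ ≤ M := by
    intro ω hω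
    obtain ⟨hR1, hRi1⟩ := hRbd ω hω
    have hK0 : (0:ℝ) < K := lt_of_lt_of_le one_pos hK
    calc ‖R ω * E * Rinv ω‖ ≤ n * ‖R ω * E‖ * ‖Rinv ω‖ := aux_mul_norm _ _
      _ ≤ n * (n * ‖R ω‖ * ‖E‖) * ‖Rinv ω‖ := by
          gcongr
          exact aux_mul_norm _ _
      _ ≤ n * (n * K * ‖E‖) * K := by gcongr
      _ ≤ M := by rw [hMdef]; nlinarith
  set C₁ : ℝ := 4 * n * M / δ with hC₁
  have hC₁0 : (0:ℝ) ≤ C₁ := by positivity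
  set r₀ : ℝ := 1 + 8 * n * M / δ + 2 * n * C₁ + 2 * n ^ 2 * C₁ with hr₀
  set C' : ℝ := n * M * C₁ + 1 with hC'
  have hr₀1 : (1:ℝ) ≤ r₀ := by
    have h1 : (0:ℝ) ≤ 8 * n * M / δ := by positivity
    have h2 : (0:ℝ) ≤ 2 * n * C₁ := by positivity
    have h3 : (0:ℝ) ≤ 2 * n ^ 2 * C₁ := by positivity
    rw [hr₀]; linarith
  refine ⟨r₀, C', lt_of_lt_of_le one_pos hr₀1, by positivity, ?_⟩
  intro r hr ω hω
  have hre : (0:ℝ) < r := lt_of_lt_of_le (lt_of_lt_of_le one_pos hr₀1) hr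
  have hr1 : (1:ℝ) ≤ r := le_trans hr₀1 hr
  have hrbig : 8 * (n:ℝ) * M / δ ≤ r := by
    have h2 : (0:ℝ) ≤ 2 * n * C₁ := by positivity
    have h3 : (0:ℝ) ≤ 2 * n ^ 2 * C₁ := by positivity
    rw [hr₀] at hr; linarith
  have hrC1 : 2 * (n:ℝ) * C₁ ≤ r := by
    have h1 : (0:ℝ) ≤ 8 * n * M / δ := by positivity
    have h3 : (0:ℝ) ≤ 2 * n ^ 2 * C₁ := by positivity
    rw [hr₀] at hr; linarith
  have hrC2 : 2 * (n:ℝ) ^ 2 * C₁ ≤ r := by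
    have h1 : (0:ℝ) ≤ 8 * n * M / δ := by positivity
    have h2 : (0:ℝ) ≤ 2 * n * C₁ := by positivity
    rw [hr₀] at hr; linarith
  set F : Matrix (Fin n) (Fin n) ℂ := R ω * E * Rinv ω with hFdef
  have hFM : ‖F‖ ≤ M := hFbd ω hω
  -- eigenvectors via the fixed point lemma
  have hfx : ∀ i : Fin n, ∃ w : Fin n → ℂ, w i = 0 ∧ ‖w‖ ≤ C₁ / r ∧
      ∀ k, Complex.I * (r * dvals ω k) * ((Pi.single i 1 : Fin n → ℂ) + w) k
            - F.mulVec ((Pi.single i 1 : Fin n → ℂ) + w) k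
          = (Complex.I * (r * dvals ω i) - F.mulVec ((Pi.single i 1 : Fin n → ℂ) + w) i)
              * ((Pi.single i 1 : Fin n → ℂ) + w) k := by
    intro i
    obtain ⟨w, h1, h2, h3⟩ := aux_fixed F (dvals ω) δ M r hδ hM1 hFM
      (fun k j hkj => hgap ω hω k j hkj) hrbig hr1 i
    refine ⟨w, h1, ?_, h3⟩
    calc ‖w‖ ≤ 4 * n * M / δ / r := h2
      _ = C₁ / r := by rw [hC₁]
  choose w hw0 hwn heig using hfx
  set V : Matrix (Fin n) (Fin n) ℂ :=
    Matrix.of (fun k l => ((Pi.single l 1 : Fin n → ℂ) + w l) k) with hV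
  set W : Matrix (Fin n) (Fin n) ℂ := Matrix.of (fun k l => w l k) with hW
  have hVW : V = 1 + W := by
    ext k l
    simp only [hV, hW, Matrix.of_apply, Matrix.add_apply, Matrix.one_apply, Pi.add_apply,
      Pi.single_apply]
  have hWn : ‖W‖ ≤ C₁ / r := by
    rw [Matrix.norm_le_iff (by positivity)]
    intro k l
    exact le_trans (norm_le_pi_norm (w l) k) (hwn l)
  have hnW : (n:ℝ) * ‖W‖ ≤ 1 / 2 := by
    have h1 : (n:ℝ) * ‖W‖ ≤ n * (C₁ / r) :=
      mul_le_mul_of_nonneg_left hWn (by positivity)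
    have h2 : (n:ℝ) * (C₁ / r) ≤ 1 / 2 := by
      rw [← mul_div_assoc, div_le_iff₀ hre]
      linarith
    linarith
  set μ : Fin n → ℂ := fun l => Complex.I * (r * dvals ω l)
    - F.mulVec ((Pi.single l 1 : Fin n → ℂ) + w l) l with hμ
  set D' : Matrix (Fin n) (Fin n) ℂ :=
    Matrix.diagonal (fun k => Complex.I * (r * dvals ω k)) with hD'
  have hDFV : (D' - F) * V = V * Matrix.diagonal μ := by
    ext k l
    have hFV : (F * V) k l = F.mulVec ((Pi.single l 1 : Fin n → ℂ) + w l) k := by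
      simp [hV, Matrix.mul_apply, Matrix.mulVec, dotProduct]
    have hVkl : V k l = ((Pi.single l 1 : Fin n → ℂ) + w l) k := rfl
    calc ((D' - F) * V) k l = (D' * V) k l - (F * V) k l := by
          rw [Matrix.sub_mul, Matrix.sub_apply]
      _ = Complex.I * (r * dvals ω k) * ((Pi.single l 1 : Fin n → ℂ) + w l) k
          - F.mulVec ((Pi.single l 1 : Fin n → ℂ) + w l) k := by
          rw [hD', Matrix.diagonal_mul, hFV, hVkl]
      _ = μ l * ((Pi.single l 1 : Fin n → ℂ) + w l) k := by
          rw [hμ]; exact heig l k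
      _ = (V * Matrix.diagonal μ) k l := by
          rw [Matrix.mul_diagonal, hVkl]; ring
  have hdet : V.det ≠ 0 := by
    intro h
    obtain ⟨x, hx0, hVx⟩ := Matrix.exists_mulVec_eq_zero_iff.2 h
    have h1 : x + W.mulVec x = 0 := by
      rw [hVW, Matrix.add_mulVec, Matrix.one_mulVec] at hVx
      exact hVx
    have h2 : ‖x‖ = ‖W.mulVec x‖ := by
      have hx : x = -(W.mulVec x) := eq_neg_of_add_eq_zero_left h1
      conv_lhs => rw [hx]
      rw [norm_neg]
    have h3 := aux_mulVec_norm W x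
    have h4 : (n:ℝ) * ‖W‖ * ‖x‖ ≤ 1 / 2 * ‖x‖ :=
      mul_le_mul_of_nonneg_right hnW (norm_nonneg x)
    have h5 : 0 < ‖x‖ := norm_pos_iff.2 hx0
    linarith
  have hVu : IsUnit V.det := isUnit_iff_ne_zero.2 hdet
  have hVVinv : V * V⁻¹ = 1 := Matrix.mul_nonsing_inv V hVu
  have hVinvV : V⁻¹ * V = 1 := Matrix.nonsing_inv_mul V hVu
  have hVinveq : V⁻¹ = 1 - W * V⁻¹ := by
    have h1 : (1 + W) * V⁻¹ = 1 := by rw [← hVW]; exact hVVinv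
    rw [add_mul, one_mul] at h1
    exact eq_sub_of_add_eq h1
  have hVinv2 : ‖V⁻¹‖ ≤ 2 := by
    have h2 := aux_mul_norm W V⁻¹
    have h3 : ‖V⁻¹‖ ≤ ‖(1 : Matrix (Fin n) (Fin n) ℂ)‖ + ‖W * V⁻¹‖ := by
      conv_lhs => rw [hVinveq]
      exact norm_sub_le _ _
    have h4 : (n:ℝ) * ‖W‖ * ‖V⁻¹‖ ≤ 1 / 2 * ‖V⁻¹‖ :=
      mul_le_mul_of_nonneg_right hnW (norm_nonneg _)
    have h5 := aux_one_norm (n := n)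
    have h6 : (0:ℝ) ≤ (n:ℝ) * ‖W‖ := by positivity
    nlinarith [norm_nonneg (W * V⁻¹), norm_nonneg V⁻¹, norm_nonneg W,
      mul_le_mul_of_nonneg_left (le_refl ‖V⁻¹‖) h6]
  have hVinv1 : ‖V⁻¹ - 1‖ ≤ 2 * ((n:ℝ) * (C₁ / r)) := by
    have h1 : V⁻¹ - 1 = -(W * V⁻¹) := by
      conv_lhs => rw [hVinveq]
      abel
    rw [h1, norm_neg]
    calc ‖W * V⁻¹‖ ≤ n * ‖W‖ * ‖V⁻¹‖ := aux_mul_norm _ _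
      _ ≤ n * (C₁ / r) * 2 := by
          refine mul_le_mul ?_ hVinv2 (norm_nonneg _) (by positivity)
          exact mul_le_mul_of_nonneg_left hWn (by positivity)
      _ = 2 * ((n:ℝ) * (C₁ / r)) := by ring
  obtain ⟨hRK, hRiK⟩ := hRbd ω hω
  obtain ⟨hRR1, hRR2⟩ := hRinvR ω hω
  refine ⟨V⁻¹ * R ω, Rinv ω * V, μ, ?_, ?_, ?_, ?_, ?_, ?_⟩
  · calc V⁻¹ * R ω * (Rinv ω * V) = V⁻¹ * (R ω * Rinv ω * V) := by
          rw [mul_assoc, mul_assoc]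
      _ = 1 := by rw [hRR1, one_mul, hVinvV]
  · calc Rinv ω * V * (V⁻¹ * R ω) = Rinv ω * (V * V⁻¹ * R ω) := by
          rw [mul_assoc, mul_assoc]
      _ = 1 := by rw [hVVinv, one_mul, hRR2]
  · -- ‖V⁻¹ * R ω‖ ≤ 2K
    have h1 : V⁻¹ * R ω = R ω + (V⁻¹ - 1) * R ω := by
      rw [sub_mul, one_mul]; abel
    have h2 : ‖(V⁻¹ - 1) * R ω‖ ≤ K := by
      calc ‖(V⁻¹ - 1) * R ω‖ ≤ n * ‖V⁻¹ - 1‖ * ‖R ω‖ := aux_mul_norm _ _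
        _ ≤ n * (2 * ((n:ℝ) * (C₁ / r))) * K := by
            refine mul_le_mul ?_ hRK (norm_nonneg _) (by positivity)
            exact mul_le_mul_of_nonneg_left hVinv1 (by positivity)
        _ ≤ K := by
            have hKr : 2 * (n:ℝ) ^ 2 * C₁ / r ≤ 1 := by
              rw [div_le_one hre]; linarith
            have h3 : (n:ℝ) * (2 * ((n:ℝ) * (C₁ / r))) = 2 * (n:ℝ) ^ 2 * C₁ / r := by
              ring
            rw [h3]
            nlinarith
    rw [h1]
    calc ‖R ω + (V⁻¹ - 1) * R ω‖ ≤ ‖R ω‖ + ‖(V⁻¹ - 1) * R ω‖ := norm_add_le _ _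
      _ ≤ 2 * K := by linarith
  · -- ‖Rinv ω * V‖ ≤ 2K
    have h1 : Rinv ω * V = Rinv ω + Rinv ω * W := by rw [hVW, mul_add, mul_one]
    have h2 : ‖Rinv ω * W‖ ≤ K := by
      calc ‖Rinv ω * W‖ ≤ n * ‖Rinv ω‖ * ‖W‖ := aux_mul_norm _ _
        _ ≤ n * K * (C₁ / r) := by
            refine mul_le_mul ?_ hWn (norm_nonneg _) (by positivity)
            exact mul_le_mul_of_nonneg_left hRiK (by positivity)
        _ ≤ K := by
            have hKr : (n:ℝ) * C₁ / r ≤ 1 := by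
              rw [div_le_one hre]
              have h0 : (0:ℝ) ≤ (n:ℝ) * C₁ := by positivity
              linarith
            have h3 : (n:ℝ) * K * (C₁ / r) = K * ((n:ℝ) * C₁ / r) := by ring
            rw [h3]
            nlinarith
    rw [h1]
    calc ‖Rinv ω + Rinv ω * W‖ ≤ ‖Rinv ω‖ + ‖Rinv ω * W‖ := norm_add_le _ _
      _ ≤ 2 * K := by linarith
  · -- diagonalization identity
    have hsum : (∑ j, ((r * ω j : ℝ) : ℂ) • A j)
        = (r : ℂ) • (∑ j, ((ω j : ℝ) : ℂ) • A j) := by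
      rw [Finset.smul_sum]
      refine Finset.sum_congr rfl fun j _ => ?_
      rw [Complex.ofReal_mul, ← smul_smul]
    have hmid : R ω * (Complex.I • (∑ j, ((r * ω j : ℝ) : ℂ) • A j) - E) * Rinv ω
        = D' - F := by
      rw [hsum, smul_smul, mul_sub, sub_mul, Matrix.mul_smul, Matrix.smul_mul,
        hdiag ω hω, hFdef, hD']
      congr 1
      ext k l
      rcases eq_or_ne k l with h | h
      · subst h
        simp [Matrix.diagonal_apply_eq]
        ring
      · simp [Matrix.diagonal_apply_ne _ h]
    calc V⁻¹ * R ω * (Complex.I • (∑ j, ((r * ω j : ℝ) : ℂ) • A j) - E) * (Rinv ω * V)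
        = V⁻¹ * (R ω * (Complex.I • (∑ j, ((r * ω j : ℝ) : ℂ) • A j) - E) * Rinv ω) * V := by
          simp only [mul_assoc]
      _ = V⁻¹ * (D' - F) * V := by rw [hmid]
      _ = V⁻¹ * (V * Matrix.diagonal μ) := by rw [mul_assoc, hDFV]
      _ = Matrix.diagonal μ := by rw [← mul_assoc, hVinvV, one_mul]
  · -- eigenvalue estimate
    intro i
    have h1 : F.mulVec ((Pi.single i 1 : Fin n → ℂ) + w i) i = F i i + F.mulVec (w i) i := by
      rw [Matrix.mulVec_add, Pi.add_apply, Matrix.mulVec_single]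
      simp
    have h2 : μ i - (Complex.I * ((r * dvals ω i : ℝ) : ℂ) - F i i)
        = -(F.mulVec (w i) i) := by
      rw [hμ]
      simp only []
      rw [h1]
      push_cast
      ring
    rw [h2, norm_neg]
    calc ‖F.mulVec (w i) i‖ ≤ ‖F.mulVec (w i)‖ := norm_le_pi_norm _ i
      _ ≤ n * ‖F‖ * ‖w i‖ := aux_mulVec_norm _ _
      _ ≤ n * M * (C₁ / r) := by
          refine mul_le_mul ?_ (hwn i) (norm_nonneg _) (by positivity)
          exact mul_le_mul_of_nonneg_left hFM (by positivity)
      _ ≤ C' / r := by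
          rw [hC', ← mul_div_assoc]
          gcongr
          linarith
end
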